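/- Multi-dimensional bigness from decisiveness (Lemma 4.3): in the abstract creature framework, let k, m, t ≥ 1, 0 < r ≤ 1, and let 𝔠_0, …, 𝔠_{k−1} be creatures such that: nor(𝔠_i) > 1 + r·(k−1) for each i; every creature with norm > 1 is (k,r)-decisive; each 𝔠_i is hereditarily (2^{m^t}, r)-big; and F : ∏_{i<k} val(𝔠_i) → 2^{m^t} is any function. Then there exist 𝔡_i ∈ Σ(𝔠_i) with nor(𝔡_i) ≥ nor(𝔠_i) − r·k such that F is constant on ∏_{i<k} val(𝔡_i). -/

import Mathlib

/-- An abstract creature framework: each creature has a finite nonempty set of values,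
a nonnegative real norm (singleton value set forces norm 0), and a reflexive transitive
successor relation along which values and norms decrease. -/
structure CreatureSystem (α : Type*) (V : Type*) where
  val : α → Finset V
  nor : α → ℝ
  succ : α → α → Prop
  val_nonempty : ∀ c, (val c).Nonempty
  nor_nonneg : ∀ c, 0 ≤ nor c
  nor_of_singleton : ∀ c, (val c).card = 1 → nor c = 0
  succ_refl : ∀ c, succ c c
  succ_trans : ∀ c d e, succ c d → succ d e → succ c e
  val_subset : ∀ c d, succ c d → val d ⊆ val c
  nor_le : ∀ c d, succ c d → nor d ≤ nor c

variable {α V : Type*}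

/-- `c` is (B,r)-big: every B-coloring of val(c) has a monochromatic successor losing
at most r in norm. -/
def CreatureSystem.Big (CS : CreatureSystem α V) (B : ℕ) (r : ℝ) (c : α) : Prop :=
  ∀ F : V → Fin B, ∃ d, CS.succ c d ∧ CS.nor c - r ≤ CS.nor d ∧
    ∀ x ∈ CS.val d, ∀ y ∈ CS.val d, F x = F y

/-- `c` is hereditarily (B,r)-big: every successor with norm > 1 is (B,r)-big. -/
def CreatureSystem.HerBig (CS : CreatureSystem α V) (B : ℕ) (r : ℝ) (c : α) : Prop :=
  ∀ d, CS.succ c d → 1 < CS.nor d → CS.Big B r d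

/-- `c` is (K,n,r)-decisive: it has a K-small successor and a K-big successor. -/
def CreatureSystem.DecisiveK (CS : CreatureSystem α V) (K n : ℕ) (r : ℝ) (c : α) : Prop :=
  ∃ dm dp, CS.succ c dm ∧ CS.succ c dp ∧
    CS.nor c - r ≤ CS.nor dm ∧ CS.nor c - r ≤ CS.nor dp ∧
    (CS.val dm).card ≤ K ∧ CS.HerBig (2 ^ K ^ n) r dp

/-- `c` is (n,r)-decisive: it is (K,n,r)-decisive for some K. -/
def CreatureSystem.Decisive (CS : CreatureSystem α V) (n : ℕ) (r : ℝ) (c : α) : Prop :=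
  ∃ K, CS.DecisiveK K n r c

/-- `c` is r-halving. -/
def CreatureSystem.Halving (CS : CreatureSystem α V) (r : ℝ) (c : α) : Prop :=
  ∃ h, CS.succ c h ∧ CS.nor c - r ≤ CS.nor h ∧
    ∀ d, CS.succ h d → 0 < CS.nor d →
      ∃ d', CS.succ c d' ∧ CS.nor c - r ≤ CS.nor d' ∧ CS.val d' ⊆ CS.val d

def EXP (B n : ℕ) : ℕ → ℕ
  | 0 => B
  | m + 1 => 2 ^ (EXP B n m) ^ n

-- auxiliary lemmas
lemma big_mono (CS : CreatureSystem α V) {B B' : ℕ} (h : B' ≤ B) {r : ℝ} {c : α}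
    (hc : CS.Big B r c) : CS.Big B' r c := by
  intro F
  obtain ⟨d, h1, h2, h3⟩ := hc (fun v => Fin.castLE h (F v))
  exact ⟨d, h1, h2, fun x hx y hy => Fin.castLE_injective h (h3 x hx y hy)⟩

lemma herbig_mono (CS : CreatureSystem α V) {B B' : ℕ} (h : B' ≤ B) {r : ℝ} {c : α}
    (hc : CS.HerBig B r c) : CS.HerBig B' r c :=
  fun d hd hnd => big_mono CS h (hc d hd hnd)

lemma big_card (CS : CreatureSystem α V) {B : ℕ} {r : ℝ} {c : α}
    (hB : CS.Big B r c) (h : 0 < CS.nor c - r) : B < (CS.val c).card := by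
  classical
  by_contra hle
  push_neg at hle
  have hB0 : 0 < B := lt_of_lt_of_le (Finset.card_pos.2 (CS.val_nonempty c)) hle
  have hcard : Fintype.card (↥(CS.val c)) ≤ Fintype.card (Fin B) := by
    simpa using hle
  obtain ⟨f⟩ := Function.Embedding.nonempty_of_card_le hcard
  obtain ⟨d, hd1, hd2, hd3⟩ := hB (fun v => if hv : v ∈ CS.val c then f ⟨v, hv⟩ else ⟨0, hB0⟩)
  obtain ⟨a, ha⟩ := CS.val_nonempty d
  have hsub := CS.val_subset _ _ hd1
  have hsingle : CS.val d = {a} := by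
    ext x
    simp only [Finset.mem_singleton]
    constructor
    · intro hx
      have := hd3 x hx a ha
      rw [dif_pos (hsub hx), dif_pos (hsub ha)] at this
      exact Subtype.ext_iff.1 (f.injective this)
    · rintro rfl; exact ha
  have : CS.nor d = 0 := CS.nor_of_singleton d (by rw [hsingle]; simp)
  rw [this] at hd2
  linarith

lemma aux_main (CS : CreatureSystem α V) (n : ℕ) (r : ℝ) (hr : 0 < r) (hr1 : r ≤ 1)
    (hdec : ∀ x, 1 < CS.nor x → CS.Decisive n r x) :
    ∀ (k : ℕ), k + 1 ≤ n → ∀ (N : ℕ), 1 ≤ N → ∀ (c : Fin (k+1) → α),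
      (∀ i, 1 + r * (k : ℝ) < CS.nor (c i)) →
      (∀ i, CS.HerBig (2 ^ N) r (c i)) →
      ∀ F : (Fin (k+1) → V) → Fin (2 ^ N),
      ∃ d : Fin (k+1) → α, (∀ i, CS.succ (c i) (d i)) ∧
        (∀ i, CS.nor (c i) - r * ((k : ℝ) + 1) ≤ CS.nor (d i)) ∧
        ∀ x y : Fin (k+1) → V, (∀ i, x i ∈ CS.val (d i)) → (∀ i, y i ∈ CS.val (d i)) →
          F x = F y := by
  intro k
  induction k with
  | zero =>
    intro _ N hN c hnor hher F
    have h1 : 1 < CS.nor (c 0) := by have := hnor 0; push_cast at this; linarith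
    obtain ⟨d0, hs, hn, hc⟩ := hher 0 (c 0) (CS.succ_refl _) h1 (fun v => F (fun _ => v))
    refine ⟨fun _ => d0, fun i => ?_, fun i => ?_, fun x y hx hy => ?_⟩
    · rw [Fin.eq_zero i]; exact hs
    · rw [Fin.eq_zero i]; push_cast; linarith
    · have ex : x = fun _ => x 0 := funext fun i => by rw [Fin.eq_zero i]
      have ey : y = fun _ => y 0 := funext fun i => by rw [Fin.eq_zero i]
      rw [ex, ey]
      exact hc (x 0) (hx 0) (y 0) (hy 0)
  | succ k IH =>
    intro hkn N hN c hnor hher F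
    classical
    have hn2 : 2 ≤ n := by omega
    have hk0 : (0:ℝ) ≤ r * k := by positivity
    have hnor1 : ∀ i, 1 < CS.nor (c i) := by
      intro i; have := hnor i; push_cast at this; nlinarith
    have hdc := fun i => hdec (c i) (hnor1 i)
    choose K hK using hdc
    choose dm dp hsm hsp hnm hnp hcard hbigp using hK
    obtain ⟨j, -, hj⟩ := Finset.exists_min_image Finset.univ K ⟨0, Finset.mem_univ 0⟩
    -- each dm i has big value set
    have hnormdm : ∀ i, CS.nor (c i) - r ≤ CS.nor (dm i) := hnm
    have hdm_nor : ∀ i, 1 < CS.nor (dm i) := by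
      intro i; have h1 := hnor i; have h2 := hnm i; push_cast at h1; nlinarith
    have hdm_big : ∀ i, CS.Big (2 ^ N) r (dm i) :=
      fun i => hher i (dm i) (hsm i) (hdm_nor i)
    have hcard_gt : ∀ i, 2 ^ N < (CS.val (dm i)).card := by
      intro i
      refine big_card CS (hdm_big i) ?_
      have h1 := hnor i; have h2 := hnm i; push_cast at h1; nlinarith
    have hKgt : ∀ i, 2 ^ N < K i := fun i => lt_of_lt_of_le (hcard_gt i) (hcard i)
    set P := (CS.val (dm j)).card with hP
    have hP1 : 1 ≤ P := Finset.card_pos.2 (CS.val_nonempty _)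
    set N' := N * P with hN'
    have hN'1 : 1 ≤ N' := Nat.one_le_iff_ne_zero.2 (by positivity)
    have hN'le : ∀ i, N' ≤ K i ^ n := by
      intro i
      have hNK : N ≤ K i := le_of_lt (lt_of_lt_of_le (Nat.lt_two_pow_self (n := N)) (le_of_lt (hKgt i)))
      have hPK : P ≤ K i := le_trans (hcard j) (le_trans (hj i (Finset.mem_univ i)) (le_refl _))
      calc N' = N * P := rfl
        _ ≤ K i * K i := Nat.mul_le_mul hNK hPK
        _ = K i ^ 2 := (sq (K i)).symm
        _ ≤ K i ^ n := Nat.pow_le_pow_right (by omega) hn2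
    -- the reduced system of creatures
    set c' : Fin (k+1) → α := fun i' => dp (j.succAbove i') with hc'def
    have hnor' : ∀ i', 1 + r * (k : ℝ) < CS.nor (c' i') := by
      intro i'
      have h1 := hnor (j.succAbove i'); have h2 := hnp (j.succAbove i')
      push_cast at h1 ⊢; nlinarith
    have hher' : ∀ i', CS.HerBig (2 ^ N') r (c' i') := by
      intro i'
      exact herbig_mono CS (Nat.pow_le_pow_right (by norm_num) (hN'le _)) (hbigp _)
    -- the encoding
    have hTcard : Fintype.card ((↥(CS.val (dm j))) → Fin (2 ^ N)) = 2 ^ N' := by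
      rw [Fintype.card_fun, Fintype.card_fin, Fintype.card_coe, ← pow_mul]
    set e := Fintype.equivFinOfCardEq hTcard with he
    set G : (Fin (k+1) → V) → Fin (2 ^ N') :=
      fun x => e (fun v => F (j.insertNth (v : V) x)) with hGdef
    obtain ⟨d', hs', hn', hc'⟩ := IH (by omega) N' hN'1 c' hnor' hher' G
    choose x₀ hx₀ using fun i' => CS.val_nonempty (d' i')
    set F' : V → Fin (2 ^ N) := fun v => F (j.insertNth v x₀) with hF'def
    obtain ⟨dj, hsj, hnj, hcj⟩ := hdm_big j F'
    set d : Fin (k+2) → α := j.insertNth dj d' with hd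
    refine ⟨d, ?_, ?_, ?_⟩
    · refine fun i => Fin.succAboveCases j ?_ ?_ i
      · show CS.succ _ (d j)
        rw [hd, Fin.insertNth_apply_same]
        exact CS.succ_trans _ _ _ (hsm j) hsj
      · intro i'
        show CS.succ _ (d (j.succAbove i'))
        rw [hd, Fin.insertNth_apply_succAbove]
        exact CS.succ_trans _ _ _ (hsp _) (hs' i')
    · refine fun i => Fin.succAboveCases j ?_ ?_ i
      · show _ ≤ CS.nor (d j)
        rw [hd, Fin.insertNth_apply_same]
        have h2 := hnm j
        push_cast; nlinarith
      · intro i'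
        show _ ≤ CS.nor (d (j.succAbove i'))
        rw [hd, Fin.insertNth_apply_succAbove]
        have h1 := hnp (j.succAbove i'); have h2 := hn' i'
        push_cast at h2 ⊢; nlinarith
    · intro x y hx hy
      have key : ∀ z : Fin (k+2) → V, (∀ i, z i ∈ CS.val (d i)) →
          F z = F' (z j) := by
        intro z hz
        have hzj : z j ∈ CS.val dj := by
          have := hz j; rwa [hd, Fin.insertNth_apply_same] at this
        have hzjm : z j ∈ CS.val (dm j) := CS.val_subset _ _ hsj hzj
        set z' : Fin (k+1) → V := fun i' => z (j.succAbove i') with hz'def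
        have hz' : ∀ i', z' i' ∈ CS.val (d' i') := by
          intro i'; have := hz (j.succAbove i')
          rwa [hd, Fin.insertNth_apply_succAbove] at this
        have hG : G z' = G x₀ := hc' z' x₀ hz' hx₀
        have hfun : (fun v : ↥(CS.val (dm j)) => F (j.insertNth (v : V) z'))
            = fun v : ↥(CS.val (dm j)) => F (j.insertNth (v : V) x₀) := e.injective hG
        have h1 : F (j.insertNth (z j) z') = F (j.insertNth (z j) x₀) :=
          congrFun hfun ⟨z j, hzjm⟩
        have h2 : j.insertNth (z j) z' = z := by
          refine funext fun i => Fin.succAboveCases j ?_ ?_ i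
          · rw [Fin.insertNth_apply_same]
          · intro i'; rw [Fin.insertNth_apply_succAbove]
        rw [← h2, Fin.insertNth_apply_same]
        exact h1
      have hxj : x j ∈ CS.val dj := by
        have := hx j; rwa [hd, Fin.insertNth_apply_same] at this
      have hyj : y j ∈ CS.val dj := by
        have := hy j; rwa [hd, Fin.insertNth_apply_same] at this
      rw [key x hx, key y hy]
      exact hcj (x j) hxj (y j) hyj

/-- multi-dimensional bigness from decisiveness (Lemma 4.3). -/
theorem stmt_17 {α V : Type*} (CS : CreatureSystem α V) (k m t : ℕ) (r : ℝ)
    (hk : 1 ≤ k) (hm : 1 ≤ m) (ht : 1 ≤ t) (hr : 0 < r) (hr1 : r ≤ 1)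
    (c : Fin k → α)
    (hnor : ∀ i, 1 + r * ((k : ℝ) - 1) < CS.nor (c i))
    (hdec : ∀ x, 1 < CS.nor x → CS.Decisive k r x)
    (hherbig : ∀ i, CS.HerBig (2 ^ m ^ t) r (c i))
    (F : (Fin k → V) → Fin (2 ^ m ^ t)) :
    ∃ d : Fin k → α, (∀ i, CS.succ (c i) (d i)) ∧
      (∀ i, CS.nor (c i) - r * (k : ℝ) ≤ CS.nor (d i)) ∧
      ∀ x y : Fin k → V, (∀ i, x i ∈ CS.val (d i)) → (∀ i, y i ∈ CS.val (d i)) →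
        F x = F y := by
  obtain ⟨k', rfl⟩ : ∃ k', k = k' + 1 := ⟨k - 1, by omega⟩
  have hN : 1 ≤ m ^ t := Nat.one_le_pow t m (by omega)
  have hnor' : ∀ i, 1 + r * (k' : ℝ) < CS.nor (c i) := by
    intro i; have := hnor i; push_cast at this ⊢; linarith
  obtain ⟨d, h1, h2, h3⟩ :=
    aux_main CS (k'+1) r hr hr1 hdec k' (le_refl _) (m^t) hN c hnor' hherbig F
  refine ⟨d, h1, fun i => ?_, h3⟩
  have := h2 i; push_cast at this ⊢; linarith
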